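/- Let M be a monoid acting idealistically (at basepoint x₀), outward properly and coboundedly by isometric embeddings on a geodesic semimetric space X. Then M is finitely generated and the map m ↦ m·x₀ is a quasi-isometry from M (with a word semimetric) to X. (Švarc-Milnor Lemma for isometric embeddings.) -/

import Mathlib

open scoped ENNReal NNReal

def IsSemimetric {X : Type*} (d : X → X → ℝ≥0∞) : Prop :=
  (∀ x y, d x y = 0 ↔ x = y) ∧ ∀ x y z, d x z ≤ d x y + d y z

noncomputable def wordDist {M : Type*} [Monoid M] (S : Set M) (x y : M) : ℝ≥0∞ :=
  sInf {n : ℝ≥0∞ | ∃ w : List M, (∀ s ∈ w, s ∈ S) ∧ x * w.prod = y ∧ n = w.length}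

noncomputable def setDist {X : Type*} (d : X → X → ℝ≥0∞) (A B : Set X) : ℝ≥0∞ :=
  ⨅ a ∈ A, ⨅ b ∈ B, d a b

theorem stmt_10 {M X : Type*} [Monoid M] [MulAction M X]
    (d : X → X → ℝ≥0∞) (hd : IsSemimetric d)
    (hiso : ∀ (m : M) (x y : X), d (m • x) (m • y) = d x y)
    (hgeo : ∀ x y : X, d x y ≠ ∞ → ∃ p : ℝ → X, p 0 = x ∧ p (d x y).toReal = y ∧
      ∀ a b : ℝ, 0 ≤ a → a ≤ b → b ≤ (d x y).toReal →
        d (p a) (p b) ≤ ENNReal.ofReal (b - a))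
    (hcob : ∃ (x₁ : X) (r : ℝ≥0∞), r ≠ ∞ ∧
      ∀ x : X, ∃ (m : M) (b : X), d x₁ b ≤ r ∧ d b x₁ ≤ r ∧ x = m • b)
    (hprop : ∀ (x₁ : X) (r : ℝ≥0∞), r ≠ ∞ →
      {m : M | setDist d {y | d x₁ y ≤ r} ((fun y => m • y) '' {y | d x₁ y ≤ r}) = 0}.Finite)
    (x₀ : X) (hbase : ∀ y, d x₀ y ≠ ∞)
    (hideal : ∀ m n : M, d (m • x₀) (n • x₀) ≠ ∞ → ∀ g : M, ∃ h : M, n * g = m * h) :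
    ∃ S : Set M, S.Finite ∧ Submonoid.closure S = ⊤ ∧
      ∃ lam eps mu : ℝ≥0, 1 ≤ lam ∧ 0 < eps ∧ 1 ≤ mu ∧
        (∀ m n : M, wordDist S m n / (lam : ℝ≥0∞) - (eps : ℝ≥0∞) ≤ d (m • x₀) (n • x₀) ∧
          d (m • x₀) (n • x₀) ≤ (lam : ℝ≥0∞) * wordDist S m n + (eps : ℝ≥0∞)) ∧
        ∀ x : X, ∃ m : M, d (m • x₀) x ≤ (mu : ℝ≥0∞) ∧ d x (m • x₀) ≤ (mu : ℝ≥0∞) := by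
  classical
  obtain ⟨hzero, htri⟩ := hd
  obtain ⟨x₁, r, hrne, hcov⟩ := hcob
  have hfin1 : (4 * r + 1 : ℝ≥0∞) ≠ ⊤ := by
    refine ENNReal.add_ne_top.mpr ⟨ENNReal.mul_ne_top ?_ hrne, ENNReal.one_ne_top⟩
    norm_num
  have hfin2 : (2 * r + 1 : ℝ≥0∞) ≠ ⊤ := by
    refine ENNReal.add_ne_top.mpr ⟨ENNReal.mul_ne_top ?_ hrne, ENNReal.one_ne_top⟩
    norm_num
  have hfin2r : (2 * r : ℝ≥0∞) ≠ ⊤ := ENNReal.mul_ne_top (by norm_num) hrne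
  have h2r4r : (2 * r : ℝ≥0∞) ≤ 4 * r + 1 :=
    le_trans (mul_le_mul_left (by norm_num : (2:ℝ≥0∞) ≤ 4) r) le_self_add
  -- cover the basepoint and produce the magic element s with s • x₀ in the strong ball
  obtain ⟨m₂, b₂, hb₁, hb₂, hx₀⟩ := hcov x₀
  have hdm : d (m₂ • x₀) ((1 : M) • x₀) ≠ ∞ := by
    rw [one_smul]
    have h1 : d (m₂ • x₀) x₀ ≤ d x₀ x₁ + r := by
      calc d (m₂ • x₀) x₀ = d (m₂ • x₀) (m₂ • b₂) := by rw [← hx₀]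
        _ = d x₀ b₂ := hiso _ _ _
        _ ≤ d x₀ x₁ + d x₁ b₂ := htri _ _ _
        _ ≤ d x₀ x₁ + r := add_le_add_right hb₁ _
    exact ne_top_of_le_ne_top (ENNReal.add_ne_top.mpr ⟨hbase x₁, hrne⟩) h1
  obtain ⟨s, hs⟩ := hideal m₂ 1 hdm 1
  have hms : m₂ * s = 1 := by simpa using hs.symm
  have hsb : s • x₀ = b₂ := by
    have h0 : d (m₂ • (s • x₀)) (m₂ • b₂) = 0 := by
      rw [← mul_smul, hms, one_smul, ← hx₀]
      exact (hzero x₀ x₀).mpr rfl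
    rw [hiso] at h0
    exact (hzero _ _).mp h0
  have hβ1 : d x₁ (s • x₀) ≤ r := by rw [hsb]; exact hb₁
  have hβ2 : d (s • x₀) x₁ ≤ r := by rw [hsb]; exact hb₂
  -- the key word-construction lemma
  have key : ∀ h : M, ∃ w : List M,
      (∀ t ∈ w, d x₀ (t • x₀) ≤ 4 * r + 1) ∧ w.prod = h ∧
      (w.length : ℝ≥0∞) ≤ d x₀ (h • x₀) + 3 := by
    intro h
    have hD : d x₀ (h • x₀) ≠ ∞ := hbase _
    obtain ⟨p, hp0, hpD, hlip⟩ := hgeo x₀ (h • x₀) hD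
    set L : ℝ := (d x₀ (h • x₀)).toReal with hLdef
    have hL0 : 0 ≤ L := ENNReal.toReal_nonneg
    set N : ℕ := ⌈L⌉₊ with hNdef
    set y : ℕ → X := fun i => p (min (i : ℝ) L) with hydef
    have hy0 : y 0 = x₀ := by
      simp only [hydef, Nat.cast_zero]
      rw [min_eq_left hL0, hp0]
    have hyN : y N = h • x₀ := by
      simp only [hydef]
      rw [min_eq_right (by rw [hNdef]; exact Nat.le_ceil L), hpD]
    have hstep : ∀ i : ℕ, d (y i) (y (i + 1)) ≤ 1 := by
      intro i
      have h1 : 0 ≤ min (i : ℝ) L := le_min (Nat.cast_nonneg i) hL0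
      have h2 : min (i : ℝ) L ≤ min ((i + 1 : ℕ) : ℝ) L := by
        apply min_le_min _ le_rfl
        exact_mod_cast Nat.le_succ i
      have h3 : min ((i + 1 : ℕ) : ℝ) L ≤ L := min_le_right _ _
      have h4 : min ((i + 1 : ℕ) : ℝ) L - min (i : ℝ) L ≤ 1 := by
        rcases le_total (i : ℝ) L with hc | hc
        · rw [min_eq_left hc]
          have := min_le_left ((i + 1 : ℕ) : ℝ) L
          push_cast at this ⊢
          linarith
        · rw [min_eq_right hc]
          have := min_le_right ((i + 1 : ℕ) : ℝ) L
          linarith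
      calc d (y i) (y (i + 1)) ≤ ENNReal.ofReal (min ((i + 1 : ℕ) : ℝ) L - min (i : ℝ) L) :=
            hlip _ _ h1 h2 h3
        _ ≤ ENNReal.ofReal 1 := ENNReal.ofReal_le_ofReal h4
        _ = 1 := ENNReal.ofReal_one
    choose n b hcb1 hcb2 hcy using fun i : ℕ => hcov (y i)
    have hanch1 : ∀ i : ℕ, d (y i) ((n i * s) • x₀) ≤ 2 * r := by
      intro i
      rw [mul_smul, hcy i, hiso]
      calc d (b i) (s • x₀) ≤ d (b i) x₁ + d x₁ (s • x₀) := htri _ _ _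
        _ ≤ r + r := add_le_add (hcb2 i) hβ1
        _ = 2 * r := (two_mul r).symm
    have hanch2 : ∀ i : ℕ, d ((n i * s) • x₀) (y i) ≤ 2 * r := by
      intro i
      rw [mul_smul, hcy i, hiso]
      calc d (s • x₀) (b i) ≤ d (s • x₀) x₁ + d x₁ (b i) := htri _ _ _
        _ ≤ r + r := add_le_add hβ2 (hcb1 i)
        _ = 2 * r := (two_mul r).symm
    have chain : ∀ i : ℕ, ∃ w : List M,
        (∀ t ∈ w, d x₀ (t • x₀) ≤ 4 * r + 1) ∧ w.prod = n i * s ∧ w.length = i + 1 := by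
      intro i
      induction i with
      | zero =>
        refine ⟨[n 0 * s], ?_, by simp, by simp⟩
        intro t ht
        rw [List.mem_singleton] at ht
        subst ht
        have h1 : d x₀ ((n 0 * s) • x₀) ≤ 2 * r := by
          nth_rewrite 1 [← hy0]
          exact hanch1 0
        exact le_trans h1 h2r4r
      | succ i ih =>
        obtain ⟨w, hwmem, hwprod, hwlen⟩ := ih
        have hbound : d ((n i * s) • x₀) ((n (i + 1) * s) • x₀) ≤ 4 * r + 1 := by
          calc d ((n i * s) • x₀) ((n (i + 1) * s) • x₀)
              ≤ d ((n i * s) • x₀) (y i) + d (y i) ((n (i + 1) * s) • x₀) := htri _ _ _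
            _ ≤ d ((n i * s) • x₀) (y i) +
                (d (y i) (y (i + 1)) + d (y (i + 1)) ((n (i + 1) * s) • x₀)) :=
                add_le_add_right (htri _ _ _) _
            _ ≤ 2 * r + (1 + 2 * r) :=
                add_le_add (hanch2 i) (add_le_add (hstep i) (hanch1 (i + 1)))
            _ = 4 * r + 1 := by ring
        obtain ⟨t, ht⟩ := hideal (n i * s) (n (i + 1) * s)
          (ne_top_of_le_ne_top hfin1 hbound) 1
        rw [mul_one] at ht
        refine ⟨w ++ [t], ?_, ?_, ?_⟩
        · intro u hu
          rcases List.mem_append.mp hu with hu | hu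
          · exact hwmem u hu
          · rw [List.mem_singleton] at hu
            subst hu
            have heq : d x₀ (u • x₀) = d ((n i * s) • x₀) ((n (i + 1) * s) • x₀) := by
              rw [← hiso (n i * s) x₀ (u • x₀), ← mul_smul, ← ht]
            rw [heq]
            exact hbound
        · rw [List.prod_append, List.prod_singleton, hwprod]
          exact ht.symm
        · simp [hwlen]
    obtain ⟨w, hwmem, hwprod, hwlen⟩ := chain N
    have hend : d ((n N * s) • x₀) (h • x₀) ≤ 2 * r := by
      rw [← hyN]
      exact hanch2 N
    obtain ⟨t, ht⟩ := hideal (n N * s) h (ne_top_of_le_ne_top hfin2r hend) 1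
    rw [mul_one] at ht
    refine ⟨w ++ [t], ?_, ?_, ?_⟩
    · intro u hu
      rcases List.mem_append.mp hu with hu | hu
      · exact hwmem u hu
      · rw [List.mem_singleton] at hu
        subst hu
        have heq : d x₀ (u • x₀) = d ((n N * s) • x₀) (h • x₀) := by
          rw [← hiso (n N * s) x₀ (u • x₀), ← mul_smul, ← ht]
        rw [heq]
        exact le_trans hend h2r4r
    · rw [List.prod_append, List.prod_singleton, hwprod]
      exact ht.symm
    · have hlen2 : (w ++ [t]).length = N + 2 := by simp [hwlen]
      rw [hlen2]
      have hceil : (N : ℝ) < L + 1 := by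
        rw [hNdef]
        exact Nat.ceil_lt_add_one hL0
      have hNle : (N : ℝ≥0∞) ≤ d x₀ (h • x₀) + 1 := by
        have hDof : d x₀ (h • x₀) = ENNReal.ofReal L := by
          rw [hLdef, ENNReal.ofReal_toReal hD]
        rw [hDof, ← ENNReal.ofReal_one, ← ENNReal.ofReal_add hL0 zero_le_one,
          ← ENNReal.ofReal_natCast N]
        exact ENNReal.ofReal_le_ofReal hceil.le
      calc ((N + 2 : ℕ) : ℝ≥0∞) = (N : ℝ≥0∞) + 2 := by push_cast; ring
        _ ≤ (d x₀ (h • x₀) + 1) + 2 := add_le_add_left hNle _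
        _ = d x₀ (h • x₀) + 3 := by ring
  -- the finite generating set
  set T : Set M := {t : M | d x₀ (t • x₀) ≤ 4 * r + 1} with hTdef
  have hx₀mem : x₀ ∈ {y : X | d x₀ y ≤ 4 * r + 1} := by
    have h0 : d x₀ x₀ = 0 := (hzero x₀ x₀).mpr rfl
    simp only [Set.mem_setOf_eq, h0]
    exact zero_le
  have hTfin : T.Finite := by
    refine (hprop x₀ (4 * r + 1) hfin1).subset ?_
    intro t ht
    simp only [hTdef, Set.mem_setOf_eq] at ht ⊢
    refine le_antisymm ?_ zero_le
    simp only [setDist]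
    exact iInf₂_le_of_le (t • x₀) ht
      (iInf₂_le_of_le (t • x₀) ⟨x₀, hx₀mem, rfl⟩ (le_of_eq ((hzero _ _).mpr rfl)))
  have hTgen : Submonoid.closure T = ⊤ := by
    rw [eq_top_iff]
    intro m _
    obtain ⟨w, hwmem, hwprod, _⟩ := key m
    rw [← hwprod]
    exact list_prod_mem fun t ht => Submonoid.subset_closure (hwmem t ht)
  have hlamcoe : (((4 * r + 1).toNNReal : ℝ≥0) : ℝ≥0∞) = 4 * r + 1 := ENNReal.coe_toNNReal hfin1
  have hmucoe : (((2 * r + 1).toNNReal : ℝ≥0) : ℝ≥0∞) = 2 * r + 1 := ENNReal.coe_toNNReal hfin2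
  have hlam1 : (1 : ℝ≥0∞) ≤ (((4 * r + 1).toNNReal : ℝ≥0) : ℝ≥0∞) := by
    rw [hlamcoe]; exact le_add_self
  refine ⟨T, hTfin, hTgen, (4 * r + 1).toNNReal, 3, (2 * r + 1).toNNReal,
    ENNReal.one_le_coe_iff.mp hlam1, by norm_num,
    ENNReal.one_le_coe_iff.mp (by rw [hmucoe]; exact le_add_self), ?_, ?_⟩
  · intro m n
    constructor
    · -- lower bound
      by_cases hdmn : d (m • x₀) (n • x₀) = ∞
      · rw [hdmn]; exact le_top
      · obtain ⟨h, hh⟩ := hideal m n hdmn 1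
        rw [mul_one] at hh
        have hDeq : d x₀ (h • x₀) = d (m • x₀) (n • x₀) := by
          rw [hh, mul_smul, hiso]
        obtain ⟨w, hwmem, hwprod, hwlen⟩ := key h
        have hwd : wordDist T m n ≤ (w.length : ℝ≥0∞) := by
          apply sInf_le
          exact ⟨w, fun u hu => hwmem u hu, by rw [hwprod]; exact hh.symm, rfl⟩
        rw [tsub_le_iff_right]
        have hdiv : wordDist T m n / (((4 * r + 1).toNNReal : ℝ≥0) : ℝ≥0∞) ≤ wordDist T m n := by
          apply ENNReal.div_le_of_le_mul
          calc wordDist T m n = wordDist T m n * 1 := (mul_one _).symm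
            _ ≤ wordDist T m n * (((4 * r + 1).toNNReal : ℝ≥0) : ℝ≥0∞) :=
              mul_le_mul_right hlam1 _
        have h3 : (((3 : ℝ≥0)) : ℝ≥0∞) = 3 := by norm_num
        calc wordDist T m n / (((4 * r + 1).toNNReal : ℝ≥0) : ℝ≥0∞)
            ≤ wordDist T m n := hdiv
          _ ≤ (w.length : ℝ≥0∞) := hwd
          _ ≤ d x₀ (h • x₀) + 3 := hwlen
          _ = d (m • x₀) (n • x₀) + ((3 : ℝ≥0) : ℝ≥0∞) := by rw [hDeq, h3]
    · -- upper bound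
      by_cases hex : ∃ k : ℕ, ∃ w : List M, (∀ u ∈ w, u ∈ T) ∧ m * w.prod = n ∧ k = w.length
      · have hne : {k : ℕ | ∃ w : List M,
            (∀ u ∈ w, u ∈ T) ∧ m * w.prod = n ∧ k = w.length}.Nonempty := by
          obtain ⟨k, hk⟩ := hex
          exact ⟨k, hk⟩
        obtain ⟨w₀, hw₀mem, hw₀eq, hw₀len⟩ := Nat.sInf_mem hne
        have hwdeq : wordDist T m n = (w₀.length : ℝ≥0∞) := by
          apply le_antisymm
          · exact sInf_le ⟨w₀, hw₀mem, hw₀eq, rfl⟩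
          · apply le_sInf
            rintro ℓ ⟨w, hwm, hwe, rfl⟩
            have hle : w₀.length ≤ w.length := by
              rw [← hw₀len]
              exact Nat.sInf_le ⟨w, hwm, hwe, rfl⟩
            exact_mod_cast hle
        have hup : ∀ w : List M, (∀ u ∈ w, u ∈ T) →
            d x₀ (w.prod • x₀) ≤ (4 * r + 1) * w.length := by
          intro w
          induction w with
          | nil =>
            intro _
            simp only [List.prod_nil, one_smul, List.length_nil, Nat.cast_zero, mul_zero]
            exact le_of_eq ((hzero x₀ x₀).mpr rfl)
          | cons u w ih =>
            intro hmem
            have h2 : d (u • x₀) ((u * w.prod) • x₀) = d x₀ (w.prod • x₀) := by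
              rw [mul_smul, hiso]
            calc d x₀ ((u :: w).prod • x₀) = d x₀ ((u * w.prod) • x₀) := by rw [List.prod_cons]
              _ ≤ d x₀ (u • x₀) + d (u • x₀) ((u * w.prod) • x₀) := htri _ _ _
              _ = d x₀ (u • x₀) + d x₀ (w.prod • x₀) := by rw [h2]
              _ ≤ (4 * r + 1) + (4 * r + 1) * w.length :=
                add_le_add (hmem u (List.mem_cons_self))
                  (ih fun v hv => hmem v (List.mem_cons_of_mem u hv))
              _ = (4 * r + 1) * ((u :: w).length : ℝ≥0∞) := by
                simp only [List.length_cons]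
                push_cast
                ring
        calc d (m • x₀) (n • x₀) = d x₀ (w₀.prod • x₀) := by rw [← hw₀eq, mul_smul, hiso]
          _ ≤ (4 * r + 1) * (w₀.length : ℝ≥0∞) := hup w₀ hw₀mem
          _ = (((4 * r + 1).toNNReal : ℝ≥0) : ℝ≥0∞) * wordDist T m n := by
              rw [hwdeq, hlamcoe]
          _ ≤ (((4 * r + 1).toNNReal : ℝ≥0) : ℝ≥0∞) * wordDist T m n + ((3 : ℝ≥0) : ℝ≥0∞) :=
              le_self_add
      · have hempty : {ℓ : ℝ≥0∞ | ∃ w : List M,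
            (∀ u ∈ w, u ∈ T) ∧ m * w.prod = n ∧ ℓ = (w.length : ℝ≥0∞)} = ∅ := by
          rw [Set.eq_empty_iff_forall_notMem]
          rintro ℓ ⟨w, hwm, hwe, rfl⟩
          exact hex ⟨w.length, w, hwm, hwe, rfl⟩
        have htop : wordDist T m n = ∞ := by
          simp only [wordDist, hempty, sInf_empty]
        rw [htop, ENNReal.mul_top (by positivity : (((4 * r + 1).toNNReal : ℝ≥0) : ℝ≥0∞) ≠ 0),
          top_add]
        exact le_top
  · -- quasi-onto
    intro x
    obtain ⟨m, b, hcb1, hcb2, hxeq⟩ := hcov x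
    refine ⟨m * s, ?_, ?_⟩
    · rw [hxeq, mul_smul, hiso]
      calc d (s • x₀) b ≤ d (s • x₀) x₁ + d x₁ b := htri _ _ _
        _ ≤ r + r := add_le_add hβ2 hcb1
        _ ≤ (((2 * r + 1).toNNReal : ℝ≥0) : ℝ≥0∞) := by
            rw [hmucoe, two_mul]
            exact le_self_add
    · rw [hxeq, mul_smul, hiso]
      calc d b (s • x₀) ≤ d b x₁ + d x₁ (s • x₀) := htri _ _ _
        _ ≤ r + r := add_le_add hcb2 hβ1
        _ ≤ (((2 * r + 1).toNNReal : ℝ≥0) : ℝ≥0∞) := by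
            rw [hmucoe, two_mul]
            exact le_self_add
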